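/- Let X1 ∈ ℝ^{n×T}, Ω ∈ ℝ^{n×n} symmetric, and Δ ∈ ℝ^{n×s}. Suppose there exist ε > 0 and Y ∈ ℝ^{T×n} such that the (n+T)×(n+T) block matrix [[X1·Y + (X1·Y)ᵀ + Ω + ε·Δ·Δᵀ, Yᵀ],[Y, −ε·I_T]] is negative definite. Then for every D ∈ ℝ^{n×T} with D·Dᵀ ⪯ Δ·Δᵀ, one has (X1 − D)·Y + Yᵀ·(X1 − D)ᵀ + Ω ≺ 0. -/

import Mathlib

open Matrix

theorem stmt_10 (n T s : ℕ)
    (X1 : Matrix (Fin n) (Fin T) ℝ)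
    (Ω : Matrix (Fin n) (Fin n) ℝ) (hΩ : Ω.IsSymm)
    (Δ : Matrix (Fin n) (Fin s) ℝ)
    (ε : ℝ) (hε : 0 < ε) (Y : Matrix (Fin T) (Fin n) ℝ)
    (hLMI : (-(Matrix.fromBlocks
        (X1 * Y + (X1 * Y)ᵀ + Ω + ε • (Δ * Δᵀ)) Yᵀ Y
        (-(ε • (1 : Matrix (Fin T) (Fin T) ℝ))))).PosDef) :
    ∀ D : Matrix (Fin n) (Fin T) ℝ, (Δ * Δᵀ - D * Dᵀ).PosSemidef →
      (-((X1 - D) * Y + Yᵀ * (X1 - D)ᵀ + Ω)).PosDef := by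
  intro D hD
  rw [Matrix.posDef_iff_dotProduct_mulVec] at hLMI ⊢
  rw [Matrix.posSemidef_iff_dotProduct_mulVec] at hD
  constructor
  · -- Hermitian
    have hΩ' : Ωᵀ = Ω := hΩ
    have hsym : ((X1 - D) * Y + Yᵀ * (X1 - D)ᵀ + Ω)ᵀ
        = (X1 - D) * Y + Yᵀ * (X1 - D)ᵀ + Ω := by
      rw [Matrix.transpose_add, Matrix.transpose_add, Matrix.transpose_mul,
        Matrix.transpose_mul, hΩ.eq]
      simp only [Matrix.transpose_transpose]
      abel
    show (-((X1 - D) * Y + Yᵀ * (X1 - D)ᵀ + Ω))ᴴ = _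
    rw [Matrix.conjTranspose_eq_transpose_of_trivial, Matrix.transpose_neg, hsym]
  · intro x hx
    -- set up
    set w : Fin T → ℝ := Y *ᵥ x with hw
    set z : Fin T → ℝ := ε⁻¹ • w with hz
    set u : Fin T → ℝ := Dᵀ *ᵥ x with hu
    have hv : (Sum.elim x z : Fin n ⊕ Fin T → ℝ) ≠ 0 := by
      intro h
      apply hx
      ext i
      have := congrFun h (Sum.inl i)
      simpa using this
    have hL := hLMI.2 (x := Sum.elim x z) hv
    rw [star_trivial] at hL
    -- expand the block quadratic form
    set M11 := X1 * Y + (X1 * Y)ᵀ + Ω + ε • (Δ * Δᵀ) with hM11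
    have key : x ⬝ᵥ (M11 *ᵥ x) + ε⁻¹ * (w ⬝ᵥ w) < 0 := by
      have expand : Sum.elim x z ⬝ᵥ ((Matrix.fromBlocks M11 Yᵀ Y
          (-(ε • (1 : Matrix (Fin T) (Fin T) ℝ)))) *ᵥ Sum.elim x z)
          = x ⬝ᵥ (M11 *ᵥ x) + x ⬝ᵥ (Yᵀ *ᵥ z) + z ⬝ᵥ (Y *ᵥ x) - ε * (z ⬝ᵥ z) := by
        rw [Matrix.fromBlocks_mulVec, sumElim_dotProduct_sumElim]
        simp [dotProduct_add, Matrix.neg_mulVec, Matrix.smul_mulVec,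
          Matrix.one_mulVec, dotProduct_neg, dotProduct_smul, smul_eq_mul]
        ring
      have hxYz : x ⬝ᵥ (Yᵀ *ᵥ z) = z ⬝ᵥ w := by
        rw [hw, Matrix.dotProduct_mulVec, Matrix.vecMul_transpose]
        exact dotProduct_comm _ _
      have hzz : z ⬝ᵥ z = ε⁻¹ * ε⁻¹ * (w ⬝ᵥ w) := by
        simp [hz, smul_dotProduct, dotProduct_smul, smul_eq_mul]; ring
      have hzw : z ⬝ᵥ w = ε⁻¹ * (w ⬝ᵥ w) := by
        simp [hz, smul_dotProduct, smul_eq_mul]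
      have hneg : Sum.elim x z ⬝ᵥ ((Matrix.fromBlocks M11 Yᵀ Y
          (-(ε • (1 : Matrix (Fin T) (Fin T) ℝ)))) *ᵥ Sum.elim x z) < 0 := by
        rw [Matrix.neg_mulVec, dotProduct_neg] at hL
        linarith
      rw [expand, hxYz, hzz, hzw] at hneg
      have : ε * (ε⁻¹ * ε⁻¹ * (w ⬝ᵥ w)) = ε⁻¹ * (w ⬝ᵥ w) := by
        field_simp
      rw [hw] at *
      calc x ⬝ᵥ (M11 *ᵥ x) + ε⁻¹ * (Y *ᵥ x ⬝ᵥ (Y *ᵥ x))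
          = x ⬝ᵥ (M11 *ᵥ x) + ε⁻¹ * (Y *ᵥ x ⬝ᵥ (Y *ᵥ x)) + ε⁻¹ * (Y *ᵥ x ⬝ᵥ (Y *ᵥ x))
            - ε * (ε⁻¹ * ε⁻¹ * (Y *ᵥ x ⬝ᵥ (Y *ᵥ x))) := by rw [this]; ring
        _ < 0 := by linarith
    -- AM-GM bound
    have amgm : -(2 * (u ⬝ᵥ w)) ≤ ε * (u ⬝ᵥ u) + ε⁻¹ * (w ⬝ᵥ w) := by
      have h0 : 0 ≤ ε⁻¹ * ∑ i, (ε * u i + w i)^2 := by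
        apply mul_nonneg (le_of_lt (inv_pos.mpr hε))
        exact Finset.sum_nonneg fun i _ => sq_nonneg _
      have hexp : ε⁻¹ * ∑ i, (ε * u i + w i)^2
          = ε * (u ⬝ᵥ u) + 2 * (u ⬝ᵥ w) + ε⁻¹ * (w ⬝ᵥ w) := by
        simp only [dotProduct, Finset.mul_sum, ← Finset.sum_add_distrib]
        apply Finset.sum_congr rfl
        intro i _
        field_simp
        ring
      linarith [hexp ▸ h0]
    -- PSD bound: u ⬝ᵥ u ≤ x ⬝ᵥ (Δ*Δᵀ *ᵥ x)
    have hpsd : u ⬝ᵥ u ≤ x ⬝ᵥ ((Δ * Δᵀ) *ᵥ x) := by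
      have := hD.2 x
      rw [star_trivial, Matrix.sub_mulVec, dotProduct_sub] at this
      have huu : x ⬝ᵥ ((D * Dᵀ) *ᵥ x) = u ⬝ᵥ u := by
        rw [hu, ← Matrix.mulVec_mulVec, Matrix.dotProduct_mulVec, ← Matrix.mulVec_transpose]
      linarith [huu ▸ this]
    -- relate target quadratic form
    have htarget : x ⬝ᵥ (((X1 - D) * Y + Yᵀ * (X1 - D)ᵀ + Ω) *ᵥ x)
        = x ⬝ᵥ (M11 *ᵥ x) - ε * (x ⬝ᵥ ((Δ * Δᵀ) *ᵥ x)) - 2 * (u ⬝ᵥ w) := by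
      have h1 : x ⬝ᵥ ((Yᵀ * (X1 - D)ᵀ) *ᵥ x) = x ⬝ᵥ (((X1 - D) * Y) *ᵥ x) := by
        rw [Matrix.dotProduct_mulVec, ← Matrix.transpose_mul, Matrix.vecMul_transpose]
        exact dotProduct_comm _ _
      have h2 : x ⬝ᵥ (((X1 - D) * Y) *ᵥ x)
          = x ⬝ᵥ ((X1 * Y) *ᵥ x) - u ⬝ᵥ w := by
        rw [Matrix.sub_mul, Matrix.sub_mulVec, dotProduct_sub]
        congr 1
        rw [hu, hw, ← Matrix.mulVec_mulVec, Matrix.dotProduct_mulVec, ← Matrix.mulVec_transpose]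
      have h3 : x ⬝ᵥ ((X1 * Y)ᵀ *ᵥ x) = x ⬝ᵥ ((X1 * Y) *ᵥ x) := by
        rw [Matrix.dotProduct_mulVec, Matrix.vecMul_transpose]
        exact dotProduct_comm _ _
      rw [hM11]
      simp only [Matrix.add_mulVec, dotProduct_add, Matrix.smul_mulVec,
        dotProduct_smul, smul_eq_mul]
      rw [h1, h2, h3]
      ring
    rw [star_trivial, Matrix.neg_mulVec, dotProduct_neg, htarget]
    have : ε * (u ⬝ᵥ u) ≤ ε * (x ⬝ᵥ ((Δ * Δᵀ) *ᵥ x)) :=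
      mul_le_mul_of_nonneg_left hpsd (le_of_lt hε)
    linarith
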